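/- For α > 0, μ < 0, the equilibrium E^π = (π, √(-μ), 0) of the desingularized coherent structure system (c_cp = 0, s = s₀, Ω = Ω₀) has a three-dimensional stable eigenspace (all eigenvalues of the Jacobian have negative real part) if and only if s₀ > 2√(-μ)/α, equivalently h > β/α - 2μ - 2μ/α². -/

import Mathlib

open Real

/-- For `α > 0`, `μ < 0`, the equilibrium `E^π` of the desingularized coherent
structure system has all three Jacobian eigenvalues `-√(-μ)` and
`-αs₀ + 2√(-μ) ± i s₀` with negative real part if and only if `s₀ > 2√(-μ)/α`,
equivalently `h > β/α - 2μ - 2μ/α²`. -/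
theorem Epi_three_dim_stable_iff (α β h μ s₀ : ℝ)
    (hα : 0 < α) (hβ : 0 ≤ β) (hμ : μ < 0) (hh : β / α ≤ h)
    (hs : s₀ = (α * h - β) / (Real.sqrt (-μ) * (1 + α ^ 2))) :
    ((∀ z ∈ ({(-(Real.sqrt (-μ)) : ℂ),
        ((-α * s₀ + 2 * Real.sqrt (-μ) : ℝ) : ℂ) + (s₀ : ℂ) * Complex.I,
        ((-α * s₀ + 2 * Real.sqrt (-μ) : ℝ) : ℂ) - (s₀ : ℂ) * Complex.I} : Set ℂ),
        z.re < 0) ↔ s₀ > 2 * Real.sqrt (-μ) / α) ∧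
    (s₀ > 2 * Real.sqrt (-μ) / α ↔ h > β / α - 2 * μ - 2 * μ / α ^ 2) := by
  have hr : 0 < Real.sqrt (-μ) := Real.sqrt_pos.mpr (by linarith)
  set r := Real.sqrt (-μ) with hrdef
  have hr2 : r ^ 2 = -μ := Real.sq_sqrt (by linarith)
  have h1 : (0:ℝ) < 1 + α ^ 2 := by positivity
  constructor
  · constructor
    · intro H
      have := H (((-α * s₀ + 2 * r : ℝ) : ℂ) + (s₀ : ℂ) * Complex.I) (by simp)
      simp [Complex.add_re, Complex.mul_re] at this
      rw [gt_iff_lt, div_lt_iff₀ hα]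
      linarith
    · intro H z hz
      have hlt : -α * s₀ + 2 * r < 0 := by
        rw [gt_iff_lt, div_lt_iff₀ hα] at H
        nlinarith
      simp only [Set.mem_insert_iff, Set.mem_singleton_iff] at hz
      rcases hz with rfl | rfl | rfl <;>
        simp [Complex.add_re, Complex.sub_re, Complex.mul_re] <;> linarith
  · rw [hs, gt_iff_lt, gt_iff_lt, div_lt_div_iff₀ (by positivity) (by positivity)]
    have hrr : 2 * r * (r * (1 + α ^ 2)) = -2 * μ * (1 + α ^ 2) := by
      rw [show 2 * r * (r * (1 + α ^ 2)) = 2 * r ^ 2 * (1 + α ^ 2) from by ring, hr2]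
      ring
    rw [hrr,
      show (β / α - 2 * μ - 2 * μ / α ^ 2 < h ↔
        (β / α - 2 * μ - 2 * μ / α ^ 2) * α ^ 2 < h * α ^ 2) from
        (mul_lt_mul_iff_of_pos_right (by positivity)).symm]
    have e1 : (β / α) * α ^ 2 = β * α := by field_simp
    have e2 : (2 * μ / α ^ 2) * α ^ 2 = 2 * μ := by field_simp
    constructor <;> intro H <;> nlinarith
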